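/- If the L²-product M ×₂ ℝ of a geodesic metric space M with ℝ satisfies the symmetric orthogonality property (SO) and M is a normed vector space (ℝ², ‖·‖), then ‖·‖ is induced by an inner product. -/

import Mathlib

/-- Birkhoff orthogonality (segment convention). -/
def BPerp {E : Type*} [NormedAddCommGroup E] [NormedSpace ℝ E] (v w : E) : Prop :=
  ∀ s : ℝ, 0 ≤ s → ‖v‖ ≤ ‖v + s • w‖

namespace Stmt18Aux

open Set

variable {F : Type*} [NormedAddCommGroup F] [NormedSpace ℝ F]

/-- Difference quotient of the squared norm. -/
noncomputable def Q (x y : F) (s : ℝ) : ℝ := (‖x + s • y‖ ^ 2 - ‖x‖ ^ 2) / (2 * s)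

/-- One-sided semi-inner product, as an infimum of slopes of the squared norm. -/
noncomputable def rho (x y : F) : ℝ := sInf ((Q x y) '' Ioi 0)

lemma Q_lb (x y : F) {s : ℝ} (hs : 0 < s) : -(‖x‖ * ‖y‖) ≤ Q x y s := by
  rw [Q, le_div_iff₀ (by positivity)]
  have h1 : ‖x‖ - s * ‖y‖ ≤ ‖x + s • y‖ := by
    have := norm_add_le (x + s • y) (-(s • y))
    simp only [add_neg_cancel_right, norm_neg, norm_smul, Real.norm_eq_abs,
      abs_of_pos hs] at this
    linarith
  rcases le_or_gt (s * ‖y‖) ‖x‖ with h | h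
  · have h2 : (‖x‖ - s * ‖y‖) ^ 2 ≤ ‖x + s • y‖ ^ 2 :=
      pow_le_pow_left₀ (by linarith) h1 2
    nlinarith [h2, sq_nonneg (s * ‖y‖)]
  · nlinarith [sq_nonneg ‖x + s • y‖, mul_le_mul_of_nonneg_left h.le (norm_nonneg x),
      mul_nonneg (mul_nonneg hs.le (norm_nonneg x)) (norm_nonneg y), norm_nonneg x]

lemma Q_mono (x y : F) {s t : ℝ} (hs : 0 < s) (hst : s ≤ t) : Q x y s ≤ Q x y t := by
  have ht : 0 < t := hs.trans_le hst
  have key : t * ‖x + s • y‖ ≤ s * ‖x + t • y‖ + (t - s) * ‖x‖ := by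
    have hdecomp : (t:ℝ) • (x + s • y) = s • (x + t • y) + (t - s) • x := by
      simp only [smul_add, smul_smul]; module
    calc t * ‖x + s • y‖ = ‖t • (x + s • y)‖ := by
          rw [norm_smul, Real.norm_eq_abs, abs_of_pos ht]
      _ = ‖s • (x + t • y) + (t - s) • x‖ := by rw [hdecomp]
      _ ≤ ‖s • (x + t • y)‖ + ‖(t - s) • x‖ := norm_add_le _ _
      _ = s * ‖x + t • y‖ + (t - s) * ‖x‖ := by
          rw [norm_smul, norm_smul, Real.norm_eq_abs, Real.norm_eq_abs,
            abs_of_pos hs, abs_of_nonneg (by linarith)]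
  have key2 : (t * ‖x + s • y‖) ^ 2 ≤ (s * ‖x + t • y‖ + (t - s) * ‖x‖) ^ 2 :=
    pow_le_pow_left₀ (by positivity) key 2
  rw [Q, Q, div_le_div_iff₀ (by positivity) (by positivity)]
  nlinarith [key2, mul_nonneg (mul_nonneg hs.le (sub_nonneg.2 hst))
    (sq_nonneg (‖x + t • y‖ - ‖x‖)), ht]

lemma bdd (x y : F) : BddBelow ((Q x y) '' Ioi 0) := by
  refine ⟨-(‖x‖ * ‖y‖), ?_⟩
  rintro q ⟨s, hs, rfl⟩
  exact Q_lb x y hs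

lemma rho_le_Q (x y : F) {s : ℝ} (hs : 0 < s) : rho x y ≤ Q x y s :=
  csInf_le (bdd x y) ⟨s, hs, rfl⟩

lemma le_rho {x y : F} {c : ℝ} (h : ∀ s, 0 < s → c ≤ Q x y s) : c ≤ rho x y :=
  le_csInf ⟨Q x y 1, 1, by norm_num, rfl⟩ (by rintro q ⟨s, hs, rfl⟩; exact h s hs)

lemma le_rho_eps {x y : F} {c : ℝ}
    (h : ∀ ε, 0 < ε → ∃ s₀, 0 < s₀ ∧ ∀ s, 0 < s → s ≤ s₀ → c - ε ≤ Q x y s) :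
    c ≤ rho x y := by
  refine le_of_forall_pos_le_add fun ε hε => ?_
  obtain ⟨s₀, hs₀, hq⟩ := h ε hε
  have : c - ε ≤ rho x y := by
    refine le_rho fun s hs => ?_
    rcases le_or_gt s s₀ with hss | hss
    · exact hq s hs hss
    · exact (hq s₀ hs₀ le_rfl).trans (Q_mono x y hs₀ hss.le)
  linarith

lemma Q_neg_left (x y : F) (s : ℝ) : Q (-x) y s = Q x (-y) s := by
  unfold Q
  have h : -x + s • y = -(x + s • (-y)) := by module
  rw [h, norm_neg, norm_neg]

lemma rho_neg_left (x y : F) : rho (-x) y = rho x (-y) := by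
  unfold rho
  rw [funext (Q_neg_left x y)]

/-- Half of the translation property of `rho` in its second argument. -/
lemma rho_smul_add (x w : F) (c : ℝ) : rho x w + c * ‖x‖ ^ 2 ≤ rho x (w + c • x) := by
  set r := rho x w with hr
  refine le_rho_eps fun ε hε => ?_
  refine ⟨min (1 / (2 * (|c| + 1))) (ε / ((|c| + 1) * (|r| + 1))), by positivity, ?_⟩
  intro s hs hs0
  have hsc : s * (|c| + 1) ≤ 1 / 2 := by
    have h1 : s ≤ 1 / (2 * (|c| + 1)) := hs0.trans (min_le_left _ _)
    have h2 : (0:ℝ) < |c| + 1 := by positivity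
    rw [le_div_iff₀ (by positivity)] at h1
    linarith
  have hse : s * ((|c| + 1) * (|r| + 1)) ≤ ε := by
    have h1 : s ≤ ε / ((|c| + 1) * (|r| + 1)) := hs0.trans (min_le_right _ _)
    rw [le_div_iff₀ (by positivity)] at h1
    linarith
  have hc1 : (0:ℝ) < 1 + s * c := by
    have : s * c ≥ -(s * |c|) := by nlinarith [neg_abs_le c, hs.le]
    nlinarith [abs_nonneg c, hs.le]
  set u := s / (1 + s * c) with hu_def
  have hu : 0 < u := by positivity
  have hu_id : u * (1 + s * c) = s := div_mul_cancel₀ s hc1.ne'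
  have hid : x + s • (w + c • x) = (1 + s * c) • (x + u • w) := by
    have expand : (1 + s * c) • (x + u • w) = x + (s * c) • x + ((1 + s * c) * u) • w := by
      module
    rw [expand, mul_comm (1 + s * c) u, hu_id]
    module
  have hnorm : ‖x + s • (w + c • x)‖ ^ 2 = (1 + s * c) ^ 2 * ‖x + u • w‖ ^ 2 := by
    rw [hid, norm_smul, Real.norm_eq_abs, abs_of_pos hc1, mul_pow]
  have hQu : 2 * u * r ≤ ‖x + u • w‖ ^ 2 - ‖x‖ ^ 2 := by
    have := rho_le_Q x w hu
    rw [Q, le_div_iff₀ (by positivity)] at this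
    linarith
  have h3 : (1 + s * c) ^ 2 * (2 * u * r) ≤ (1 + s * c) ^ 2 * (‖x + u • w‖ ^ 2 - ‖x‖ ^ 2) :=
    mul_le_mul_of_nonneg_left hQu (sq_nonneg _)
  have h4 : (1 + s * c) ^ 2 * (2 * u * r) = 2 * s * (1 + s * c) * r := by
    linear_combination (2 * r * (1 + s * c)) * hu_id
  have h7 : -ε ≤ s * (c * r) := by
    nlinarith [neg_abs_le (c * r), abs_mul c r, hs.le, abs_nonneg c, abs_nonneg r,
      mul_le_mul_of_nonneg_left (neg_abs_le (c * r)) hs.le]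
  have h8 : 2 * s * (-ε) ≤ 2 * s * (s * (c * r)) :=
    mul_le_mul_of_nonneg_left h7 (by positivity)
  have h9 : (0:ℝ) ≤ s * (s * (c ^ 2 * ‖x‖ ^ 2)) := by positivity
  rw [Q, hnorm, le_div_iff₀ (by positivity)]
  nlinarith [h3, h4, h8, h9]

/-- Translation property of `rho` in its second argument. -/
lemma rho_add_smul (x w : F) (c : ℝ) : rho x (w + c • x) = rho x w + c * ‖x‖ ^ 2 := by
  have h1 := rho_smul_add x w c
  have h2 := rho_smul_add x (w + c • x) (-c)
  have h3 : w + c • x + (-c) • x = w := by module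
  rw [h3] at h2
  linarith

lemma Q_sum_nonneg (x y : F) {s : ℝ} (hs : 0 < s) : 0 ≤ Q x y s + Q x (-y) s := by
  have h1 : 2 * ‖x‖ ≤ ‖x + s • y‖ + ‖x + s • (-y)‖ := by
    have h := norm_add_le (x + s • y) (x + s • (-y))
    have h2 : x + s • y + (x + s • (-y)) = (2:ℝ) • x := by module
    rw [h2, norm_smul] at h
    simpa using h
  rw [Q, Q, ← add_div, le_div_iff₀ (by positivity)]
  nlinarith [sq_nonneg (‖x + s • y‖ - ‖x + s • (-y)‖), norm_nonneg x,
    norm_nonneg (x + s • y), norm_nonneg (x + s • (-y))]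

lemma rho_neg_add (x y : F) : -rho x y ≤ rho x (-y) := by
  refine le_rho fun t ht => ?_
  rw [neg_le]
  refine le_rho fun s hs => ?_
  rcases le_or_gt s t with h | h
  · have := Q_sum_nonneg x y hs
    have := Q_mono x (-y) hs h
    linarith
  · have := Q_sum_nonneg x y ht
    have := Q_mono x y ht h.le
    linarith

lemma nat_choice (y : F) {ε : ℝ} (hε : 0 < ε) :
    ∃ n : ℕ, 0 < (n : ℝ) ∧ ‖y‖ ^ 2 * (1 / (n : ℝ)) < ε := by
  obtain ⟨n, hn⟩ := exists_nat_gt (max 1 (‖y‖ ^ 2 / ε))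
  have h1 : (1:ℝ) < n := lt_of_le_of_lt (le_max_left _ _) hn
  have h2 : ‖y‖ ^ 2 / ε < n := lt_of_le_of_lt (le_max_right _ _) hn
  refine ⟨n, by linarith, ?_⟩
  rw [div_lt_iff₀ hε] at h2
  rw [mul_one_div, div_lt_iff₀ (by linarith)]
  linarith

section Telescope
variable (hsym : ∀ x y : F, rho x y = rho y x)
include hsym

lemma step_low (x y : F) (c u : ℝ) (hu : 0 < u) :
    ‖x + c • y‖ ^ 2 + 2 * u * (rho y x + c * ‖y‖ ^ 2) ≤ ‖x + (c + u) • y‖ ^ 2 := by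
  have h1 := rho_le_Q (x + c • y) y hu
  rw [Q, le_div_iff₀ (by positivity)] at h1
  have h2 : x + c • y + u • y = x + (c + u) • y := by module
  rw [h2] at h1
  have h3 : rho (x + c • y) y = rho y x + c * ‖y‖ ^ 2 := by
    rw [hsym]
    exact rho_add_smul y x c
  nlinarith [h1, h3]

lemma step_high (x y : F) (c u : ℝ) (hu : 0 < u) :
    ‖x + (c + u) • y‖ ^ 2 + 2 * u * (rho y (-x) - (c + u) * ‖y‖ ^ 2) ≤ ‖x + c • y‖ ^ 2 := by
  have h1 := rho_le_Q (x + (c + u) • y) (-y) hu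
  rw [Q, le_div_iff₀ (by positivity)] at h1
  have h2 : x + (c + u) • y + u • (-y) = x + c • y := by module
  rw [h2] at h1
  have h3 : rho (x + (c + u) • y) (-y) = rho y (-x) - (c + u) * ‖y‖ ^ 2 := by
    rw [hsym, rho_neg_left]
    have h4 : -(x + (c + u) • y) = -x + (-(c + u)) • y := by module
    rw [h4, rho_add_smul y (-x) (-(c + u))]
    ring
  nlinarith [h1, h3]

lemma ind_low (x y : F) (u : ℝ) (hu : 0 < u) : ∀ k : ℕ,
    ‖x‖ ^ 2 + 2 * ((k : ℝ) * u) * rho y x + ((k : ℝ) * ((k : ℝ) - 1) * u ^ 2) * ‖y‖ ^ 2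
      ≤ ‖x + ((k : ℝ) * u) • y‖ ^ 2 := by
  intro k
  induction k with
  | zero => simp
  | succ k ih =>
    have hstep := step_low hsym x y ((k : ℝ) * u) u hu
    push_cast
    rw [show ((k:ℝ) + 1) * u = (k:ℝ) * u + u from by ring]
    nlinarith [ih, hstep]

lemma ind_high (x y : F) (u : ℝ) (hu : 0 < u) : ∀ k : ℕ,
    ‖x + ((k : ℝ) * u) • y‖ ^ 2 + 2 * ((k : ℝ) * u) * rho y (-x)
      - ((k : ℝ) * ((k : ℝ) + 1) * u ^ 2) * ‖y‖ ^ 2 ≤ ‖x‖ ^ 2 := by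
  intro k
  induction k with
  | zero => simp
  | succ k ih =>
    have hstep := step_high hsym x y ((k : ℝ) * u) u hu
    push_cast
    rw [show ((k:ℝ) + 1) * u = (k:ℝ) * u + u from by ring]
    nlinarith [ih, hstep]

lemma expand_low (x y : F) : ‖x‖ ^ 2 + 2 * rho y x + ‖y‖ ^ 2 ≤ ‖x + y‖ ^ 2 := by
  refine le_of_forall_pos_le_add fun ε hε => ?_
  obtain ⟨n, hn, hyn⟩ := nat_choice y hε
  have h := ind_low hsym x y (1 / (n : ℝ)) (by positivity) n
  rw [show (n : ℝ) * (1 / (n : ℝ)) = 1 from by field_simp, one_smul] at h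
  have hco : ((n:ℝ)) * ((n:ℝ) - 1) * (1 / (n:ℝ)) ^ 2 = 1 - 1 / (n:ℝ) := by
    field_simp
  rw [hco] at h
  nlinarith [h, hyn]

lemma expand_high (x y : F) : ‖x + y‖ ^ 2 + 2 * rho y (-x) - ‖y‖ ^ 2 ≤ ‖x‖ ^ 2 := by
  have key : ∀ ε : ℝ, 0 < ε → ‖x + y‖ ^ 2 + 2 * rho y (-x) - ‖y‖ ^ 2 ≤ ‖x‖ ^ 2 + ε := by
    intro ε hε
    obtain ⟨n, hn, hyn⟩ := nat_choice y hε
    have h := ind_high hsym x y (1 / (n : ℝ)) (by positivity) n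
    rw [show (n : ℝ) * (1 / (n : ℝ)) = 1 from by field_simp, one_smul] at h
    have hco : ((n:ℝ)) * ((n:ℝ) + 1) * (1 / (n:ℝ)) ^ 2 = 1 + 1 / (n:ℝ) := by
      field_simp
    rw [hco] at h
    nlinarith [h, hyn]
  exact le_of_forall_pos_le_add key

/-- Symmetry of `rho` implies the parallelogram law. -/
lemma parallelogram (x y : F) :
    ‖x + y‖ ^ 2 + ‖x - y‖ ^ 2 = 2 * ‖x‖ ^ 2 + 2 * ‖y‖ ^ 2 := by
  have hA := expand_low hsym x y
  have hB := expand_high hsym x y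
  have hA' := expand_low hsym x (-y)
  have hB' := expand_high hsym x (-y)
  rw [← sub_eq_add_neg, norm_neg, rho_neg_left] at hA' hB'
  rw [show -(-x) = x from neg_neg x] at hB'
  have hS := rho_neg_add y x
  linarith

end Telescope

variable {E : Type*} [NormedAddCommGroup E] [NormedSpace ℝ E]

/-- An element of the `L²` product. -/
noncomputable def mk (x : E) (a : ℝ) : WithLp 2 (E × ℝ) :=
  (WithLp.equiv 2 (E × ℝ)).symm (x, a)

lemma mk_norm_sq (x : E) (a : ℝ) : ‖mk x a‖ ^ 2 = ‖x‖ ^ 2 + a ^ 2 := by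
  rw [WithLp.prod_norm_sq_eq_of_L2]
  simp [mk, sq_abs]

lemma mk_add_smul (x y : E) (a b s : ℝ) :
    mk x a + s • mk y b = mk (x + s • y) (a + s * b) := rfl

/-- Birkhoff orthogonality in the `L²` product, in terms of `rho`. -/
lemma bperp_iff (x y : E) (a b : ℝ) :
    BPerp (mk x a) (mk y b) ↔ -(a * b) ≤ rho x y := by
  constructor
  · intro h
    refine le_rho_eps fun ε hε => ?_
    refine ⟨2 * ε / (b ^ 2 + 1), by positivity, fun s hs hs0 => ?_⟩
    have hsb : s * (b ^ 2 + 1) ≤ 2 * ε := (le_div_iff₀ (by positivity)).mp hs0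
    have h1 := h s hs.le
    rw [mk_add_smul] at h1
    have h2 : ‖mk x a‖ ^ 2 ≤ ‖mk (x + s • y) (a + s * b)‖ ^ 2 :=
      pow_le_pow_left₀ (norm_nonneg _) h1 2
    rw [mk_norm_sq, mk_norm_sq] at h2
    rw [Q, le_div_iff₀ (by positivity)]
    nlinarith [h2, mul_le_mul_of_nonneg_left hsb hs.le]
  · intro h s hs
    rcases eq_or_lt_of_le hs with rfl | hs
    · simp
    have h1 := rho_le_Q x y hs
    rw [Q, le_div_iff₀ (by positivity)] at h1
    have h2 : ‖x‖ ^ 2 + a ^ 2 ≤ ‖x + s • y‖ ^ 2 + (a + s * b) ^ 2 := by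
      nlinarith [h1, h, sq_nonneg (s * b), hs.le]
    rw [mk_add_smul]
    have h3 : ‖mk x a‖ ^ 2 ≤ ‖mk (x + s • y) (a + s * b)‖ ^ 2 := by
      rw [mk_norm_sq, mk_norm_sq]; exact h2
    nlinarith [h3, norm_nonneg (mk x a), norm_nonneg (mk (x + s • y) (a + s * b))]

/-- Symmetric Birkhoff orthogonality in the `L²` product makes `rho` symmetric. -/
lemma rho_symm_of_SO
    (hSO : ∀ v w : WithLp 2 (E × ℝ), BPerp v w → BPerp w v) (x y : E) :
    rho x y = rho y x := by
  have key : ∀ u v : E, rho u v ≤ rho v u := by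
    intro u v
    have h1 : BPerp (mk u 1) (mk v (-rho u v)) := by
      rw [bperp_iff]; linarith
    have h2 := hSO _ _ h1
    rw [bperp_iff] at h2
    linarith
  exact le_antisymm (key x y) (key y x)

end Stmt18Aux

/-- If the L²-product E ×₂ ℝ of a two-dimensional normed space E with ℝ has
symmetric Birkhoff orthogonality (property (SO)), then the norm of E is induced
by an inner product (parallelogram identity / `InnerProductSpaceable`). -/
theorem stmt18 {E : Type*} [NormedAddCommGroup E] [NormedSpace ℝ E]
    (hdim : Module.finrank ℝ E = 2)
    (hSO : ∀ v w : WithLp 2 (E × ℝ), BPerp v w → BPerp w v) :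
    InnerProductSpaceable E := by
  have hsym := Stmt18Aux.rho_symm_of_SO hSO
  refine ⟨fun x y => ?_⟩
  have hp := Stmt18Aux.parallelogram hsym x y
  linear_combination hp
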